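/- For every integer n with n ≡ 2 (mod 3), there exists a natural number K such that (T^*)^k(n) ≡ 5 (mod 9) for all k < K, and (T^*)^k(n) ≡ 2 or 8 (mod 9) for all k ≥ K. That is, every T^*-trajectory consists of finitely many numbers congruent to 5 (mod 9) followed only by numbers congruent to 2 or 8 (mod 9). -/
import Mathlib


/-- The accelerated Collatz map `T^*`, defined on integers congruent to 2 (mod 3). -/
def Tstar (n : ℤ) : ℤ :=
  if n % 6 = 5 then (3 * n + 1) / 2
  else if n % 12 = 2 then (3 * n + 2) / 4
  else if n % 24 = 20 then (3 * n + 4) / 8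
  else if n % 48 = 8 then (3 * n + 8) / 16
  else if n % 96 = 80 then (3 * n + 16) / 32
  else if n % 192 = 32 then (3 * n + 32) / 64
  else n / 64

lemma keyA (n : ℤ) (hn : n % 3 = 2) :
    (Tstar n % 9 = 2 ∨ Tstar n % 9 = 8) ∨ (Tstar n % 9 = n % 9 ∧ n = 64 * Tstar n) := by
  unfold Tstar
  split_ifs with h1 h2 h3 h4 h5 h6
  · have e : 3 * n + 1 = 2 * (9 * (n / 6) + 8) := by omega
    rw [e, Int.mul_ediv_cancel_left _ (by norm_num)]
    left; right; omega
  · have e : 3 * n + 2 = 4 * (9 * (n / 12) + 2) := by omega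
    rw [e, Int.mul_ediv_cancel_left _ (by norm_num)]
    left; left; omega
  · have e : 3 * n + 4 = 8 * (9 * (n / 24) + 8) := by omega
    rw [e, Int.mul_ediv_cancel_left _ (by norm_num)]
    left; right; omega
  · have e : 3 * n + 8 = 16 * (9 * (n / 48) + 2) := by omega
    rw [e, Int.mul_ediv_cancel_left _ (by norm_num)]
    left; left; omega
  · have e : 3 * n + 16 = 32 * (9 * (n / 96) + 8) := by omega
    rw [e, Int.mul_ediv_cancel_left _ (by norm_num)]
    left; right; omega
  · have e : 3 * n + 32 = 64 * (9 * (n / 192) + 2) := by omega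
    rw [e, Int.mul_ediv_cancel_left _ (by norm_num)]
    left; left; omega
  · have h7 : n % 192 = 128 := by omega
    right
    constructor
    · omega
    · omega

theorem stmt_18 (n : ℤ) (hn : n % 3 = 2) :
    ∃ K : ℕ, (∀ k < K, Tstar^[k] n % 9 = 5) ∧
      (∀ k ≥ K, Tstar^[k] n % 9 = 2 ∨ Tstar^[k] n % 9 = 8) := by
  have hmod3 : ∀ k : ℕ, Tstar^[k] n % 3 = 2 := by
    intro k
    induction k with
    | zero => simpa using hn
    | succ k ih =>
      have h := keyA (Tstar^[k] n) ih
      rw [Function.iterate_succ_apply']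
      omega
  have hex : ∃ k : ℕ, Tstar^[k] n % 9 ≠ 5 := by
    by_contra hall
    push_neg at hall
    have hpow : ∀ k : ℕ, n = 64 ^ k * Tstar^[k] n := by
      intro k
      induction k with
      | zero => simp
      | succ k ih =>
        have h := keyA (Tstar^[k] n) (hmod3 k)
        have h5 : Tstar (Tstar^[k] n) % 9 = 5 := by
          have := hall (k + 1)
          rwa [Function.iterate_succ_apply'] at this
        have heq : Tstar^[k] n = 64 * Tstar (Tstar^[k] n) := by omega
        rw [Function.iterate_succ_apply']
        linear_combination ih + (64:ℤ) ^ k * heq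
    obtain ⟨k, hk⟩ := pow_unbounded_of_one_lt (|n|) (by norm_num : (1:ℤ) < 64)
    have hne : Tstar^[k] n ≠ 0 := by have := hmod3 k; omega
    have h1 : (1:ℤ) ≤ |Tstar^[k] n| := Int.one_le_abs hne
    have habs : |n| = 64 ^ k * |Tstar^[k] n| := by
      calc |n| = |64 ^ k * Tstar^[k] n| := by rw [← hpow k]
        _ = 64 ^ k * |Tstar^[k] n| := by rw [abs_mul, abs_pow]; norm_num
    have : (64:ℤ) ^ k ≤ |n| := by
      rw [habs]
      exact le_mul_of_one_le_right (by positivity) h1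
    omega
  refine ⟨Nat.find hex, ?_, ?_⟩
  · intro k hk
    have := Nat.find_min hex hk
    simpa using this
  · intro k hk
    induction k, hk using Nat.le_induction with
    | base =>
      have h1 := Nat.find_spec hex
      have h2 := hmod3 (Nat.find hex)
      omega
    | succ k hk ih =>
      have h := keyA (Tstar^[k] n) (hmod3 k)
      rw [Function.iterate_succ_apply']
      omega
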